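/- Let f*: ℝ^d → ℝ be a differentiable convex function and x_0, …, x_d ∈ ℝ^d be d+1 points such that the origin 0 lies in the interior of conv{x_0,…,x_d}. Then the set of feasible gradients A = {v ∈ ℝ^d : v · x_i ≤ ∇f*(x_i) · x_i for all i} equals the convex hull of the vertices v_0, …, v_d, where v_i is the unique point with v_i · x_j = ∇f*(x_j) · x_j for all j ≠ i. In particular, A is a compact (bounded) polytope. -/

import Mathlib

lemma grad_subgrad {E : Type*} [NormedAddCommGroup E] [InnerProductSpace ℝ E] [CompleteSpace E]
    {f : E → ℝ} (hf : ConvexOn ℝ Set.univ f) (hdf : Differentiable ℝ f) (p q : E) :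
    f p + (inner ℝ (gradient f p) (q - p) : ℝ) ≤ f q := by
  set g : ℝ → ℝ := fun t => f (t • (q - p) + p) with hg
  have hconv : ConvexOn ℝ Set.univ g := by
    have h := hf.comp_affineMap (AffineMap.lineMap p q : ℝ →ᵃ[ℝ] E)
    have : (fun t : ℝ => f ((AffineMap.lineMap p q : ℝ →ᵃ[ℝ] E) t)) = g := by
      funext t
      simp [g, AffineMap.lineMap_apply]
    simpa [Set.preimage_univ, Function.comp_def, this] using h
  have hc : HasDerivAt (fun t : ℝ => t • (q - p) + p) (q - p) 0 := by
    simpa using ((hasDerivAt_id (0:ℝ)).smul_const (q - p)).add_const p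
  have hfd : HasFDerivAt f (InnerProductSpace.toDual ℝ E (gradient f p)) ((0:ℝ) • (q - p) + p) := by
    have := (hdf p).hasGradientAt.hasFDerivAt
    simpa using this
  have hderiv : HasDerivAt g ((inner ℝ (gradient f p) (q - p) : ℝ)) 0 := by
    have := hfd.comp_hasDerivAt 0 hc
    simpa [g, Function.comp_def, InnerProductSpace.toDual_apply_apply] using this
  have hslope := hconv.le_slope_of_hasDerivAt (Set.mem_univ (0:ℝ)) (Set.mem_univ (1:ℝ))
    one_pos hderiv
  have hs : slope g 0 1 = f q - f p := by
    simp [slope, g]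
  rw [hs] at hslope
  linarith

lemma pos_comb {d : ℕ} (x : Fin (d+1) → EuclideanSpace ℝ (Fin d))
    (hx : (0 : EuclideanSpace ℝ (Fin d)) ∈ interior (convexHull ℝ (Set.range x))) :
    ∃ c : Fin (d+1) → ℝ, (∀ i, 0 < c i) ∧ ∑ i, c i = 1 ∧ ∑ i, c i • x i = 0 := by
  classical
  obtain ⟨ε, hε, hball⟩ : ∃ ε > 0, Metric.ball 0 ε ⊆ convexHull ℝ (Set.range x) :=
    Metric.mem_nhds_iff.mp (mem_interior_iff_mem_nhds.mp hx)
  set u : EuclideanSpace ℝ (Fin d) := ∑ i, x i with hu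
  set s : ℝ := ε / (2 * (‖u‖ + 1)) with hsdef
  have hs : 0 < s := by positivity
  have hmem : -(s • u) ∈ convexHull ℝ (Set.range x) := by
    apply hball
    rw [Metric.mem_ball, dist_zero_right, norm_neg, norm_smul, Real.norm_eq_abs,
      abs_of_pos hs, hsdef, div_mul_eq_mul_div, div_lt_iff₀ (by positivity)]
    nlinarith [norm_nonneg u]
  rw [convexHull_range_eq_exists_affineCombination] at hmem
  obtain ⟨t, w', hw0, hw1, hwc⟩ := hmem
  rw [Finset.affineCombination_eq_linear_combination _ _ _ hw1] at hwc
  set a : Fin (d+1) → ℝ := fun i => if i ∈ t then w' i else 0 with ha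
  have ha0 : ∀ i, 0 ≤ a i := fun i => by
    by_cases h : i ∈ t <;> simp [ha, h, hw0 i]
  have ha1 : ∑ i, a i = 1 := by
    rw [← hw1]; simp [ha, Finset.sum_ite_mem]
  have hac : ∑ i, a i • x i = -(s • u) := by
    rw [← hwc]
    simp [ha, ite_smul, Finset.sum_ite_mem]
  set D : ℝ := 1 + ((d : ℝ) + 1) * s with hD
  have hDpos : 0 < D := by positivity
  refine ⟨fun i => (a i + s) / D, fun i => div_pos (by linarith [ha0 i]) hDpos, ?_, ?_⟩
  · rw [← Finset.sum_div, Finset.sum_add_distrib, ha1, Finset.sum_const, Finset.card_univ,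
      Fintype.card_fin, nsmul_eq_mul]
    push_cast
    field_simp
    rw [hD]
  · have h1 : ∀ i, ((a i + s) / D) • x i = D⁻¹ • (a i • x i + s • x i) := by
      intro i; rw [div_eq_inv_mul, mul_smul, add_smul, smul_add]
    simp_rw [h1]
    rw [← Finset.smul_sum, Finset.sum_add_distrib, hac, ← Finset.smul_sum, ← hu,
      neg_add_cancel, smul_zero]

theorem statement3 (d : ℕ)
    (f : EuclideanSpace ℝ (Fin d) → ℝ)
    (hf : ConvexOn ℝ Set.univ f) (hdf : Differentiable ℝ f)
    (x : Fin (d + 1) → EuclideanSpace ℝ (Fin d))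
    (hx : (0 : EuclideanSpace ℝ (Fin d)) ∈ interior (convexHull ℝ (Set.range x)))
    (v : Fin (d + 1) → EuclideanSpace ℝ (Fin d))
    (hv : ∀ i j, j ≠ i → (inner ℝ (v i) (x j) : ℝ) = inner ℝ (gradient f (x j)) (x j)) :
    ({w : EuclideanSpace ℝ (Fin d) |
        ∀ k, (inner ℝ w (x k) : ℝ) ≤ inner ℝ (gradient f (x k)) (x k)}
      = convexHull ℝ (Set.range v)) ∧
    IsCompact {w : EuclideanSpace ℝ (Fin d) |
        ∀ k, (inner ℝ w (x k) : ℝ) ≤ inner ℝ (gradient f (x k)) (x k)} := by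
  classical
  set b : Fin (d+1) → ℝ := fun k => inner ℝ (gradient f (x k)) (x k) with hbdef
  obtain ⟨c, hcpos, hcsum, hczero⟩ := pos_comb x hx
  -- spanning
  have hspan : Submodule.span ℝ (Set.range x) = ⊤ := by
    have htop : affineSpan ℝ (Set.range x) = ⊤ :=
      affineSpan_eq_top_of_nonempty_interior ⟨0, hx⟩
    rw [Submodule.eq_top_iff']
    intro y
    apply affineSpan_subset_span (k := ℝ)
    rw [htop]; trivial
  -- injectivity from inner products
  have hinj : ∀ u : EuclideanSpace ℝ (Fin d), (∀ k, (inner ℝ u (x k) : ℝ) = 0) → u = 0 := by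
    intro u hu
    have h : u ∈ (Submodule.span ℝ (Set.range x))ᗮ := by
      rw [Submodule.mem_orthogonal]
      intro y hy
      induction hy using Submodule.span_induction with
      | mem y hy => obtain ⟨k, rfl⟩ := hy; rw [real_inner_comm]; exact hu k
      | zero => simp
      | add y z _ _ hy hz => rw [inner_add_left, hy, hz, add_zero]
      | smul r y _ hy => rw [real_inner_smul_left, hy, mul_zero]
    rw [hspan, Submodule.top_orthogonal_eq_bot] at h
    simpa using h
  -- for any u, ∑ c i * ⟪u, x i⟫ = 0
  have hzero : ∀ u : EuclideanSpace ℝ (Fin d), ∑ i, c i * (inner ℝ u (x i) : ℝ) = 0 := by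
    intro u
    have : (inner ℝ u (∑ i, c i • x i) : ℝ) = ∑ i, c i * (inner ℝ u (x i) : ℝ) := by
      rw [inner_sum]
      exact Finset.sum_congr rfl fun i _ => real_inner_smul_right u (x i) (c i)
    rw [← this, hczero, inner_zero_right]
  set B : ℝ := ∑ i, c i * b i with hBdef
  -- B ≥ 0 via convexity
  have hB0 : 0 ≤ B := by
    have h1 : ∀ i, f (x i) - f 0 ≤ b i := by
      intro i
      have := grad_subgrad hf hdf (x i) 0
      rw [zero_sub, inner_neg_right] at this
      simp only [hbdef]
      linarith
    have h2 : f (∑ i, c i • x i) ≤ ∑ i, c i * f (x i) :=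
      hf.map_sum_le (fun i _ => (hcpos i).le) hcsum (fun i _ => Set.mem_univ _)
    rw [hczero] at h2
    have h3 : ∑ i, c i * (f (x i) - f 0) ≤ B :=
      Finset.sum_le_sum fun i _ => mul_le_mul_of_nonneg_left (h1 i) (hcpos i).le
    have h4 : ∑ i, c i * (f (x i) - f 0) = (∑ i, c i * f (x i)) - f 0 := by
      simp_rw [mul_sub]
      rw [Finset.sum_sub_distrib, ← Finset.sum_mul, hcsum, one_mul]
    linarith
  -- key identity for vertices
  have hvii : ∀ i, c i * (inner ℝ (v i) (x i) : ℝ) = c i * b i - B := by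
    intro i
    have h := hzero (v i)
    rw [← Finset.add_sum_erase _ _ (Finset.mem_univ i)] at h
    have h2 : ∑ j ∈ Finset.univ.erase i, c j * (inner ℝ (v i) (x j) : ℝ)
        = ∑ j ∈ Finset.univ.erase i, c j * b j := by
      refine Finset.sum_congr rfl fun j hj => ?_
      rw [hv i j (Finset.ne_of_mem_erase hj)]
    rw [h2] at h
    have h3 : B = c i * b i + ∑ j ∈ Finset.univ.erase i, c j * b j := by
      rw [hBdef, ← Finset.add_sum_erase _ _ (Finset.mem_univ i)]
    linarith
  -- vertices are feasible
  have hvfeas : ∀ i, v i ∈ {w : EuclideanSpace ℝ (Fin d) | ∀ k, (inner ℝ w (x k) : ℝ) ≤ b k} := by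
    intro i k
    by_cases hk : k = i
    · subst hk
      have := hvii k
      have hc := hcpos k
      rw [← mul_le_mul_iff_right₀ hc]
      linarith
    · exact le_of_eq (hv i k hk)
  -- A is convex
  have hAconv : Convex ℝ {w : EuclideanSpace ℝ (Fin d) | ∀ k, (inner ℝ w (x k) : ℝ) ≤ b k} := by
    intro p hp q hq α β hα hβ hαβ k
    have h1 := mul_le_mul_of_nonneg_left (hp k) hα
    have h2 := mul_le_mul_of_nonneg_left (hq k) hβ
    simp only [Set.mem_setOf_eq, inner_add_left, real_inner_smul_left]
    have h3 : α * b k + β * b k = b k := by rw [← add_mul, hαβ, one_mul]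
    linarith
  have key : {w : EuclideanSpace ℝ (Fin d) | ∀ k, (inner ℝ w (x k) : ℝ) ≤ b k}
      = convexHull ℝ (Set.range v) := by
    apply Set.Subset.antisymm
    · intro w hw
      rcases eq_or_lt_of_le hB0 with hB | hB
      · -- B = 0 : w = v 0
        have hsum0 : ∑ j, c j * (b j - (inner ℝ w (x j) : ℝ)) = 0 := by
          simp_rw [mul_sub]
          rw [Finset.sum_sub_distrib, hzero w, ← hBdef, ← hB, sub_zero]
        have hall : ∀ j, (inner ℝ w (x j) : ℝ) = b j := by
          intro j
          have := (Finset.sum_eq_zero_iff_of_nonneg (fun j _ =>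
            mul_nonneg (hcpos j).le (by linarith [hw j]))).mp hsum0 j (Finset.mem_univ j)
          have hcj := (hcpos j).ne'
          have : b j - (inner ℝ w (x j) : ℝ) = 0 := by
            rcases mul_eq_zero.mp this with h | h
            · exact absurd h hcj
            · exact h
          linarith
        have hw0 : w = v 0 := by
          have := hinj (w - v 0) ?_
          · rwa [sub_eq_zero] at this
          intro k
          rw [inner_sub_left, hall k]
          by_cases hk : k = 0
          · subst hk
            have := hvii 0
            rw [← hB, sub_zero] at this
            have := mul_left_cancel₀ (hcpos 0).ne' this
            rw [this]; ring
          · rw [hv 0 k hk]; ring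
        rw [hw0]
        exact subset_convexHull ℝ _ (Set.mem_range_self 0)
      · -- B > 0
        set lam : Fin (d+1) → ℝ := fun i => c i * (b i - (inner ℝ w (x i) : ℝ)) / B with hlam
        have hlam0 : ∀ i, 0 ≤ lam i := fun i =>
          div_nonneg (mul_nonneg (hcpos i).le (by linarith [hw i])) hB.le
        have hlam1 : ∑ i, lam i = 1 := by
          rw [hlam, ← Finset.sum_div]
          have : ∑ i, c i * (b i - (inner ℝ w (x i) : ℝ)) = B := by
            simp_rw [mul_sub]
            rw [Finset.sum_sub_distrib, hzero w, sub_zero, hBdef]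
          rw [this, div_self hB.ne']
        have hrep : ∑ i, lam i • v i = w := by
          have := hinj (∑ i, lam i • v i - w) ?_
          · rwa [sub_eq_zero] at this
          intro k
          rw [inner_sub_left, sub_eq_zero, sum_inner]
          have hsplit : ∑ i, (inner ℝ (lam i • v i) (x k) : ℝ)
              = lam k * (inner ℝ (v k) (x k) : ℝ)
                + ∑ i ∈ Finset.univ.erase k, lam i * b k := by
            rw [← Finset.add_sum_erase _ _ (Finset.mem_univ k), real_inner_smul_left]
            congr 1
            refine Finset.sum_congr rfl fun i hi => ?_
            rw [real_inner_smul_left, hv i k (Finset.ne_of_mem_erase hi).symm]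
          have herase : ∑ i ∈ Finset.univ.erase k, lam i = 1 - lam k := by
            have := Finset.add_sum_erase _ lam (Finset.mem_univ k)
            rw [hlam1] at this
            linarith
          rw [hsplit, ← Finset.sum_mul, herase]
          have hck : c k ≠ 0 := (hcpos k).ne'
          have hvk : (inner ℝ (v k) (x k) : ℝ) = b k - B / c k := by
            have h := hvii k
            have h2 : (inner ℝ (v k) (x k) : ℝ) = (c k * b k - B) / c k := by
              rw [← h, mul_div_cancel_left₀ _ hck]
            rw [h2, sub_div, mul_div_cancel_left₀ _ hck]
          have hlamk : lam k = c k * (b k - (inner ℝ w (x k) : ℝ)) / B := rfl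
          rw [hvk, hlamk]
          set P : ℝ := (inner ℝ w (x k) : ℝ) with hP
          field_simp
          ring
        rw [← hrep]
        have : ∑ i, lam i • v i = Finset.univ.centerMass lam v := by
          rw [Finset.centerMass_eq_of_sum_1 _ _ hlam1]
        rw [this]
        exact Finset.centerMass_mem_convexHull _ (fun i _ => hlam0 i)
          (by rw [hlam1]; exact one_pos) (fun i _ => Set.mem_range_self i)
    · exact convexHull_min (fun p hp => by obtain ⟨i, rfl⟩ := hp; exact hvfeas i) hAconv
  exact ⟨key, key ▸ (Set.finite_range v).isCompact_convexHull ℝ⟩
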